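/- arXiv:0906.2717 — 3 statements merged into one kernel-verified Lean document; each statement's English description precedes it below -/
import Mathlib

section
/- Let X ≥ 0 be a random variable whose tail satisfies P(X > x) ~ c₀ x^{−α} as x → ∞ for some c₀ > 0, α > 0, and let T ≥ 0 be independent of X with E[T^{α}] < ∞ and E[T^{α+δ}] < ∞ for some δ > 0. Then P(XT > x) ~ E[T^α] · P(X > x) as x → ∞ (Breiman's lemma). -/
open MeasureTheory ProbabilityTheory Filter

theorem breiman_lemma {Ω : Type*} [MeasurableSpace Ω]
    (μ : Measure Ω) [IsProbabilityMeasure μ] (X T : Ω → ℝ)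
    (hX : Measurable X) (hT : Measurable T)
    (hX0 : ∀ ω, 0 ≤ X ω) (hT0 : ∀ ω, 0 ≤ T ω)
    (hindep : IndepFun X T μ)
    (c₀ α δ : ℝ) (hc₀ : 0 < c₀) (hα : 0 < α) (hδ : 0 < δ)
    (htail : Tendsto (fun x : ℝ => (μ {ω | x < X ω}).toReal / (c₀ * x ^ (-α)))
      atTop (nhds 1))
    (hmomα : Integrable (fun ω => T ω ^ α) μ)
    (hmomδ : Integrable (fun ω => T ω ^ (α + δ)) μ) :
    Tendsto (fun x : ℝ => (μ {ω | x < X ω * T ω}).toReal / (μ {ω | x < X ω}).toReal)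
      atTop (nhds (∫ ω, T ω ^ α ∂μ)) := by
  have hXm : AEMeasurable X μ := hX.aemeasurable
  have hTm : AEMeasurable T μ := hT.aemeasurable
  set ν : Measure ℝ := μ.map T with hνdef
  have hPX : IsProbabilityMeasure (μ.map X) := Measure.isProbabilityMeasure_map hXm
  have hPT : IsProbabilityMeasure ν := Measure.isProbabilityMeasure_map hTm
  have hprod : μ.map (fun ω => (X ω, T ω)) = (μ.map X).prod ν :=
    (indepFun_iff_map_prod_eq_prod_map_map hXm hTm).mp hindep
  set F : ℝ → ℝ := fun x => (μ {ω | x < X ω}).toReal with hFdef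
  have hsetm : ∀ x : ℝ, MeasurableSet {p : ℝ × ℝ | x < p.1 * p.2} := fun x =>
    measurableSet_lt measurable_const (measurable_fst.mul measurable_snd)
  -- measurability of the slice measure
  have hmeas_g : ∀ x : ℝ, Measurable (fun t => (μ.map X) {s | x < s * t}) := fun x =>
    measurable_measure_prodMk_right (hsetm x)
  -- key identity
  have hkey : ∀ x : ℝ, (μ {ω | x < X ω * T ω}).toReal
      = ∫ t, ((μ.map X) {s | x < s * t}).toReal ∂ν := by
    intro x
    have h1 : {ω | x < X ω * T ω} = (fun ω => (X ω, T ω)) ⁻¹' {p : ℝ × ℝ | x < p.1 * p.2} := rfl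
    rw [h1, ← Measure.map_apply (hX.prodMk hT) (hsetm x), hprod,
      Measure.prod_apply_symm (hsetm x),
      integral_toReal (hmeas_g x).aemeasurable (ae_of_all _ fun t => measure_lt_top _ _)]
    rfl
  -- relating slice to F for t > 0
  have hgt : ∀ x : ℝ, ∀ t : ℝ, 0 < t →
      ((μ.map X) {s | x < s * t}).toReal = F (x / t) := by
    intro x t ht
    have hs : {s : ℝ | x < s * t} = Set.Ioi (x / t) := Set.ext fun s => (div_lt_iff₀ ht).symm
    rw [hs, Measure.map_apply hX measurableSet_Ioi]
    rfl
  have hg0 : ∀ x : ℝ, 0 < x → ((μ.map X) {s | x < s * 0}).toReal = 0 := by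
    intro x hx
    have h : {s : ℝ | x < s * 0} = (∅ : Set ℝ) := by
      ext s; simp [not_lt.mpr hx.le]
    rw [h]
    simp
  have hFle : ∀ y : ℝ, F y ≤ 1 := fun y =>
    ENNReal.toReal_mono ENNReal.one_ne_top prob_le_one
  have hF0 : ∀ y : ℝ, 0 ≤ F y := fun y => ENNReal.toReal_nonneg
  -- choose threshold M
  have h12 : ∀ᶠ x in atTop, F x / (c₀ * x ^ (-α)) ∈ Set.Icc (1/2 : ℝ) 2 :=
    htail.eventually (Icc_mem_nhds (by norm_num) (by norm_num))
  obtain ⟨M₀, hM₀⟩ := eventually_atTop.mp (h12.and (eventually_ge_atTop (1 : ℝ)))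
  set M : ℝ := max M₀ 1 with hMdef
  have hM1 : (1 : ℝ) ≤ M := le_max_right _ _
  have hMpos : (0 : ℝ) < M := lt_of_lt_of_le one_pos hM1
  have hMprop : ∀ x : ℝ, M ≤ x →
      (1/2 : ℝ) * (c₀ * x ^ (-α)) ≤ F x ∧ F x ≤ 2 * (c₀ * x ^ (-α)) ∧ 0 < x := by
    intro x hx
    have hx0 : (0 : ℝ) < x := lt_of_lt_of_le hMpos hx
    have hb : (0 : ℝ) < c₀ * x ^ (-α) :=
      mul_pos hc₀ (Real.rpow_pos_of_pos hx0 _)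
    have h := hM₀ x (le_trans (le_max_left _ _) hx)
    obtain ⟨⟨hl, hr⟩, _⟩ := h
    constructor
    · calc (1/2 : ℝ) * (c₀ * x ^ (-α)) ≤ (F x / (c₀ * x ^ (-α))) * (c₀ * x ^ (-α)) := by
            apply mul_le_mul_of_nonneg_right hl hb.le
      _ = F x := div_mul_cancel₀ _ hb.ne'
    constructor
    · calc F x = (F x / (c₀ * x ^ (-α))) * (c₀ * x ^ (-α)) := (div_mul_cancel₀ _ hb.ne').symm
      _ ≤ 2 * (c₀ * x ^ (-α)) := mul_le_mul_of_nonneg_right hr hb.le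
    · exact hx0
  have hFpos : ∀ x : ℝ, M ≤ x → 0 < F x := by
    intro x hx
    obtain ⟨hl, _, hx0⟩ := hMprop x hx
    exact lt_of_lt_of_le (by positivity) hl
  -- the dominating constant
  set C : ℝ := max 4 (2 * M ^ α / c₀) with hCdef
  have hC4 : (4 : ℝ) ≤ C := le_max_left _ _
  -- main bound
  have hbound : ∀ x : ℝ, M ≤ x → ∀ t : ℝ, 0 ≤ t →
      ((μ.map X) {s | x < s * t}).toReal / F x ≤ C * t ^ α := by
    intro x hx t ht
    obtain ⟨hFl, hFr, hx0⟩ := hMprop x hx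
    have hFx := hFpos x hx
    rcases eq_or_lt_of_le ht with h0 | htpos
    · rw [← h0, hg0 x hx0, Real.zero_rpow hα.ne', mul_zero, zero_div]
    rw [hgt x t htpos]
    have htα : (0 : ℝ) < t ^ α := Real.rpow_pos_of_pos htpos _
    rcases le_or_gt M (x / t) with hcase | hcase
    · -- x/t ≥ M : use tail bound
      obtain ⟨_, hFr', hxt0⟩ := hMprop _ hcase
      have hrw : (x / t) ^ (-α) = x ^ (-α) * t ^ α := by
        rw [Real.div_rpow hx0.le htpos.le, Real.rpow_neg htpos.le, div_eq_mul_inv, inv_inv]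
      have h1 : F (x / t) / F x ≤ (2 * (c₀ * (x / t) ^ (-α))) / ((1/2) * (c₀ * x ^ (-α))) :=
        div_le_div₀ (by positivity) hFr' (by positivity) hFl
      have h2 : (2 * (c₀ * (x / t) ^ (-α))) / ((1/2) * (c₀ * x ^ (-α))) = 4 * t ^ α := by
        rw [hrw]
        have hxα : (0:ℝ) < x ^ (-α) := Real.rpow_pos_of_pos hx0 _
        field_simp
        ring
      calc F (x / t) / F x ≤ 4 * t ^ α := h1.trans_eq h2
        _ ≤ C * t ^ α := mul_le_mul_of_nonneg_right hC4 htα.le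
    · -- x/t < M : crude bound
      have hxlt : x < M * t := by
        rw [div_lt_iff₀ htpos] at hcase; linarith [hcase]
      have h1 : F (x / t) / F x ≤ 1 / ((1/2) * (c₀ * x ^ (-α))) :=
        div_le_div₀ (by positivity) (hFle _) (by positivity) hFl
      have hxα : (0:ℝ) < x ^ (-α) := Real.rpow_pos_of_pos hx0 _
      have h2 : 1 / ((1/2) * (c₀ * x ^ (-α))) = 2 / c₀ * x ^ α := by
        rw [Real.rpow_neg hx0.le]
        have hxa : (0:ℝ) < x ^ α := Real.rpow_pos_of_pos hx0 _
        field_simp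
      have h3 : x ^ α ≤ (M * t) ^ α :=
        Real.rpow_le_rpow hx0.le hxlt.le hα.le
      have h4 : (M * t) ^ α = M ^ α * t ^ α := Real.mul_rpow hMpos.le htpos.le
      calc F (x / t) / F x ≤ 2 / c₀ * x ^ α := h1.trans_eq h2
        _ ≤ 2 / c₀ * (M ^ α * t ^ α) := by
            rw [← h4]; exact mul_le_mul_of_nonneg_left h3 (by positivity)
        _ = (2 * M ^ α / c₀) * t ^ α := by ring
        _ ≤ C * t ^ α := mul_le_mul_of_nonneg_right (le_max_right _ _) htα.le
  -- ae nonneg on ν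
  have hν0 : ∀ᵐ t ∂ν, 0 ≤ t := by
    rw [hνdef, ae_map_iff hTm (measurableSet_Ici (a := (0:ℝ)))]
    exact ae_of_all _ hT0
  -- pointwise limit
  have hBinv : Tendsto (fun x : ℝ => c₀ * x ^ (-α) / F x) atTop (nhds 1) := by
    have := (htail.inv₀ one_ne_zero)
    simp only [inv_div, inv_one] at this
    exact this
  have hlim : ∀ t : ℝ, 0 < t →
      Tendsto (fun x => F (x / t) / F x) atTop (nhds (t ^ α)) := by
    intro t ht
    have hdiv : Tendsto (fun x : ℝ => x / t) atTop atTop :=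
      Tendsto.atTop_div_const ht tendsto_id
    have h1 : Tendsto (fun x : ℝ => F (x / t) / (c₀ * (x / t) ^ (-α))) atTop (nhds 1) :=
      htail.comp hdiv
    have h3 : Tendsto
        (fun x : ℝ => F (x / t) / (c₀ * (x / t) ^ (-α)) * (c₀ * x ^ (-α) / F x) * t ^ α)
        atTop (nhds (t ^ α)) := by
      have := (h1.mul hBinv).mul_const (t ^ α)
      simpa using this
    refine h3.congr' ?_
    filter_upwards [eventually_ge_atTop M] with x hx
    have hx0 : (0 : ℝ) < x := lt_of_lt_of_le hMpos hx
    have hFx := hFpos x hx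
    have hxα : (0:ℝ) < x ^ (-α) := Real.rpow_pos_of_pos hx0 _
    have htα : (0:ℝ) < t ^ α := Real.rpow_pos_of_pos ht _
    have hrw : (x / t) ^ (-α) = x ^ (-α) * t ^ α := by
      rw [Real.div_rpow hx0.le ht.le, Real.rpow_neg ht.le, div_eq_mul_inv, inv_inv]
    rw [hrw]
    field_simp
  -- dominated convergence
  have hCα : Integrable (fun t : ℝ => C * t ^ α) ν := by
    have hm : Measurable fun t : ℝ => t ^ α := measurable_id.pow measurable_const
    rw [hνdef, integrable_map_measure ((hm.const_mul C).aestronglyMeasurable) hTm]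
    exact (hmomα.const_mul C).congr (ae_of_all _ fun ω => rfl)
  have hDCT : Tendsto (fun x : ℝ => ∫ t, ((μ.map X) {s | x < s * t}).toReal / F x ∂ν)
      atTop (nhds (∫ t, t ^ α ∂ν)) := by
    apply tendsto_integral_filter_of_dominated_convergence (fun t => C * t ^ α)
    · filter_upwards with x
      exact (((hmeas_g x).ennreal_toReal).div_const _).aestronglyMeasurable
    · filter_upwards [eventually_ge_atTop M] with x hx
      filter_upwards [hν0] with t ht
      have h := hbound x hx t ht
      rwa [Real.norm_eq_abs, abs_of_nonneg (div_nonneg ENNReal.toReal_nonneg (hF0 x))]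
    · exact hCα
    · filter_upwards [hν0] with t ht
      rcases eq_or_lt_of_le ht with h0 | htpos
      · rw [← h0, Real.zero_rpow hα.ne']
        apply Tendsto.congr' ?_ tendsto_const_nhds
        filter_upwards [eventually_gt_atTop (0:ℝ)] with x hx
        rw [hg0 x hx, zero_div]
      · apply (hlim t htpos).congr' ?_
        filter_upwards with x
        rw [hgt x t htpos]
  -- conclude
  have hint : ∫ t, t ^ α ∂ν = ∫ ω, T ω ^ α ∂μ := by
    have hm : Measurable fun t : ℝ => t ^ α := measurable_id.pow measurable_const
    rw [hνdef, integral_map hTm hm.aestronglyMeasurable]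
  rw [← hint]
  apply hDCT.congr
  intro x
  rw [hkey x, integral_div]
end

section
/- Let X ≥ 0 with P(X > x) = c₀ x^{−α} exactly for all x ≥ x₀ (or with P(X > x) ~ c₀ x^{−α}), and let T ≥ 0 independent of X with E[T^α] < ∞. Then also P(XT > x) ~ c₀ E[T^α] x^{−α} as x → ∞. (Breiman's lemma under exact power tail, requiring only E T^α < ∞.) -/
open MeasureTheory ProbabilityTheory Filter

theorem breiman_lemma_exact_tail {Ω : Type*} [MeasurableSpace Ω]
    (μ : Measure Ω) [IsProbabilityMeasure μ] (X T : Ω → ℝ)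
    (hX : Measurable X) (hT : Measurable T)
    (hX0 : ∀ ω, 0 ≤ X ω) (hT0 : ∀ ω, 0 ≤ T ω)
    (hindep : IndepFun X T μ)
    (c₀ α x₀ : ℝ) (hc₀ : 0 < c₀) (hα : 0 < α)
    (htail : ∀ x : ℝ, x₀ ≤ x → (μ {ω | x < X ω}).toReal = c₀ * x ^ (-α))
    (hmom : Integrable (fun ω => T ω ^ α) μ) :
    Tendsto (fun x : ℝ => (μ {ω | x < X ω * T ω}).toReal / x ^ (-α))
      atTop (nhds (c₀ * ∫ ω, T ω ^ α ∂μ)) := by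
  set x₁ : ℝ := max x₀ 1 with hx₁def
  have hx₁ : (0 : ℝ) < x₁ := lt_of_lt_of_le one_pos (le_max_right _ _)
  set ν := μ.map T with hνdef
  set ρ := μ.map X with hρdef
  haveI : IsProbabilityMeasure ν := Measure.isProbabilityMeasure_map hT.aemeasurable
  haveI : IsProbabilityMeasure ρ := Measure.isProbabilityMeasure_map hX.aemeasurable
  -- measurability of slices
  have hsmeas : ∀ x : ℝ, MeasurableSet {p : ℝ × ℝ | x < p.2 * p.1} :=
    fun x => measurableSet_lt measurable_const (measurable_snd.mul measurable_fst)
  have hFmeas' : ∀ x : ℝ, Measurable fun t : ℝ => ρ {a | x < a * t} := by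
    intro x
    exact measurable_measure_prodMk_left (ν := ρ) (hsmeas x)
  have hFmeas : ∀ x : ℝ, Measurable fun t : ℝ => (ρ {a | x < a * t}).toReal :=
    fun x => (hFmeas' x).ennreal_toReal
  -- key product identity
  have hprod : μ.map (fun ω => (T ω, X ω)) = ν.prod ρ :=
    (indepFun_iff_map_prod_eq_prod_map_map hT.aemeasurable hX.aemeasurable).mp hindep.symm
  have hA : ∀ x : ℝ, μ {ω | x < X ω * T ω} = ∫⁻ t, ρ {a | x < a * t} ∂ν := by
    intro x
    calc μ {ω | x < X ω * T ω}
        = μ.map (fun ω => (T ω, X ω)) {p : ℝ × ℝ | x < p.2 * p.1} := by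
          rw [Measure.map_apply (hT.prodMk hX) (hsmeas x)]
          rfl
      _ = (ν.prod ρ) {p : ℝ × ℝ | x < p.2 * p.1} := by rw [hprod]
      _ = ∫⁻ t, ρ (Prod.mk t ⁻¹' {p : ℝ × ℝ | x < p.2 * p.1}) ∂ν :=
          Measure.prod_apply (hsmeas x)
      _ = ∫⁻ t, ρ {a | x < a * t} ∂ν := rfl
  -- exact value of the slice for x ≥ x₁ * t, t > 0
  have hkey : ∀ t : ℝ, 0 < t → ∀ x : ℝ, x₁ * t ≤ x →
      (ρ {a | x < a * t}).toReal = c₀ * t ^ α * x ^ (-α) := by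
    intro t ht x hxt
    have hx : (0 : ℝ) < x := lt_of_lt_of_le (mul_pos hx₁ ht) hxt
    have hdiv : x₀ ≤ x / t :=
      le_trans (le_max_left _ _) ((le_div_iff₀ ht).2 hxt)
    have hset : {a : ℝ | x < a * t} = {a : ℝ | x / t < a} := by
      ext a; simp [div_lt_iff₀ ht]
    have hmapX : ρ {a : ℝ | x / t < a} = μ {ω | x / t < X ω} := by
      rw [hρdef]
      exact Measure.map_apply hX measurableSet_Ioi
    rw [hset, hmapX, htail _ hdiv, Real.div_rpow hx.le ht.le, Real.rpow_neg ht.le,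
      div_eq_mul_inv, inv_inv]
    ring
  have hval : ∀ t : ℝ, 0 < t → ∀ x : ℝ, x₁ * t ≤ x →
      (ρ {a | x < a * t}).toReal * x ^ α = c₀ * t ^ α := by
    intro t ht x hxt
    have hx : (0 : ℝ) < x := lt_of_lt_of_le (mul_pos hx₁ ht) hxt
    rw [hkey t ht x hxt, mul_assoc, ← Real.rpow_add hx]
    simp
  -- a.e. nonnegativity on ν
  have haeν : ∀ᵐ t ∂ν, 0 ≤ t := by
    exact (ae_map_iff hT.aemeasurable measurableSet_Ici).2 (ae_of_all _ hT0)
  -- integrability of t ^ α against ν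
  have hcont : Continuous fun t : ℝ => t ^ α :=
    continuous_iff_continuousAt.2 fun t => Real.continuousAt_rpow_const t α (Or.inr hα.le)
  have hint : Integrable (fun t : ℝ => t ^ α) ν :=
    (integrable_map_measure hcont.aestronglyMeasurable hT.aemeasurable).2 hmom
  -- dominated convergence
  have hDCT : Tendsto (fun x : ℝ => ∫ t, (ρ {a | x < a * t}).toReal * x ^ α ∂ν)
      atTop (nhds (∫ t, c₀ * t ^ α ∂ν)) := by
    apply tendsto_integral_filter_of_dominated_convergence
      (bound := fun t : ℝ => max c₀ (x₁ ^ α) * t ^ α)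
    · filter_upwards with x
      exact ((hFmeas x).mul_const _).aestronglyMeasurable
    · filter_upwards [eventually_ge_atTop x₁] with x hx
      filter_upwards [haeν] with t ht
      have hx0 : (0 : ℝ) < x := lt_of_lt_of_le hx₁ hx
      have hnn : 0 ≤ (ρ {a | x < a * t}).toReal * x ^ α :=
        mul_nonneg ENNReal.toReal_nonneg (Real.rpow_nonneg hx0.le α)
      rw [Real.norm_of_nonneg hnn]
      rcases le_or_gt (x₁ * t) x with hle | hlt
      · rcases eq_or_lt_of_le ht with h0 | ht0
        · rw [← h0]
          have hempty : {a : ℝ | x < a * (0 : ℝ)} = ∅ := by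
            ext a; simp [hx0.not_gt]
          rw [hempty]
          simp [Real.zero_rpow hα.ne']
        · rw [hval t ht0 x hle]
          exact mul_le_mul_of_nonneg_right (le_max_left _ _) (Real.rpow_nonneg ht α)
      · have ht0 : (0 : ℝ) < t := by nlinarith
        have h1 : (ρ {a | x < a * t}).toReal ≤ 1 := by
          calc (ρ {a | x < a * t}).toReal ≤ (ρ Set.univ).toReal :=
                ENNReal.toReal_mono (measure_ne_top _ _) (measure_mono (Set.subset_univ _))
            _ = 1 := by simp
        calc (ρ {a | x < a * t}).toReal * x ^ α
            ≤ 1 * x ^ α := by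
              exact mul_le_mul_of_nonneg_right h1 (Real.rpow_nonneg hx0.le α)
          _ = x ^ α := one_mul _
          _ ≤ (x₁ * t) ^ α := Real.rpow_le_rpow hx0.le hlt.le hα.le
          _ = x₁ ^ α * t ^ α := Real.mul_rpow hx₁.le ht0.le
          _ ≤ max c₀ (x₁ ^ α) * t ^ α :=
              mul_le_mul_of_nonneg_right (le_max_right _ _) (Real.rpow_nonneg ht α)
    · exact hint.const_mul _
    · filter_upwards [haeν] with t ht
      rcases eq_or_lt_of_le ht with h0 | ht0
      · rw [← h0]
        have : (fun x : ℝ => (ρ {a | x < a * (0 : ℝ)}).toReal * x ^ α) =ᶠ[atTop]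
            fun _ => (0 : ℝ) := by
          filter_upwards [eventually_gt_atTop (0 : ℝ)] with x hx0
          have hempty : {a : ℝ | x < a * (0 : ℝ)} = ∅ := by
            ext a; simp [hx0.not_gt]
          rw [hempty]
          simp
        rw [show c₀ * (0 : ℝ) ^ α = 0 by simp [Real.zero_rpow hα.ne']]
        exact Tendsto.congr' this.symm tendsto_const_nhds
      · have : (fun x : ℝ => (ρ {a | x < a * t}).toReal * x ^ α) =ᶠ[atTop]
            fun _ => c₀ * t ^ α := by
          filter_upwards [eventually_ge_atTop (x₁ * t)] with x hx
          exact hval t ht0 x hx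
        exact Tendsto.congr' this.symm tendsto_const_nhds
  -- identify the integrals with the quotient in the statement
  have hEq : (fun x : ℝ => ∫ t, (ρ {a | x < a * t}).toReal * x ^ α ∂ν)
      =ᶠ[atTop] fun x : ℝ => (μ {ω | x < X ω * T ω}).toReal / x ^ (-α) := by
    filter_upwards [eventually_gt_atTop (0 : ℝ)] with x hx0
    have h1 : ∫ t, (ρ {a | x < a * t}).toReal ∂ν = (μ {ω | x < X ω * T ω}).toReal := by
      rw [integral_toReal (hFmeas' x).aemeasurable (ae_of_all _ fun t => measure_lt_top ρ _),
        ← hA x]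
    rw [MeasureTheory.integral_mul_const, h1, Real.rpow_neg hx0.le, div_eq_mul_inv, inv_inv]
  have hval2 : ∫ t, c₀ * t ^ α ∂ν = c₀ * ∫ ω, T ω ^ α ∂μ := by
    rw [MeasureTheory.integral_const_mul,
      integral_map hT.aemeasurable hcont.aestronglyMeasurable]
  exact Tendsto.congr' hEq (hval2 ▸ hDCT)
end

section
/- Let (X_t) be strictly stationary and let φ_{nj}(x) = E[exp(i x S_j / a_n)] where S_j = X_1 + ⋯ + X_j. Then for all n, all d < m ≤ n and all x: |k_n(φ_{nm}(x) − 1) − n(φ_{nd}(x) − φ_{n,d−1}(x))| ≤ k_n (d−1) |φ_{nd}(x) − 1| + k_n d |φ_{n,d−1}(x) − 1| + k_n Σ_{j=d+1}^{m} E[ (|x a_n^{−1}(S_j − S_d)| ∧ 2) · (|x a_n^{−1} X_1| ∧ 2) ], where k_n = n/m (treat n = k_n m for simplicity). -/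
open MeasureTheory Finset

lemma tcb_abs_exp (θ : ℝ) : ‖Complex.exp (θ * Complex.I)‖ = 1 :=
  Complex.norm_exp_ofReal_mul_I θ

lemma tcb_abs_exp_sub_one (θ : ℝ) :
    ‖Complex.exp (θ * Complex.I) - 1‖ ≤ min |θ| 2 := by
  refine le_min ?_ ?_
  · have h1 : Complex.exp (θ * Complex.I) - 1
        = Complex.exp ((θ/2 : ℝ) * Complex.I) * (2 * Real.sin (θ/2) * Complex.I) := by
      have h0 : (θ : ℂ) * Complex.I = (θ/2 : ℝ) * Complex.I + (θ/2 : ℝ) * Complex.I := by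
        push_cast; ring
      rw [h0, Complex.exp_add, Complex.exp_mul_I]
      have hs : Complex.sin ((θ/2 : ℝ)) = (Real.sin (θ/2) : ℂ) :=
        (Complex.ofReal_sin (θ/2)).symm
      rw [← hs]
      linear_combination Complex.sin_sq_add_cos_sq ((θ/2:ℝ):ℂ) -
        Complex.sin ((θ/2:ℝ):ℂ)^2 * Complex.I_sq
    rw [h1]
    rw [norm_mul, tcb_abs_exp]
    have : ‖2 * (Real.sin (θ/2) : ℂ) * Complex.I‖ = 2 * |Real.sin (θ/2)| := by
      rw [norm_mul, norm_mul, Complex.norm_real, Real.norm_eq_abs, Complex.norm_I, mul_one, Complex.norm_two]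
    rw [this, one_mul]
    have := Real.abs_sin_le_abs (x := θ/2)
    rw [abs_div] at this
    norm_num at this ⊢
    linarith
  · calc ‖Complex.exp (θ * Complex.I) - 1‖
        ≤ ‖Complex.exp (θ * Complex.I)‖ + ‖(1:ℂ)‖ := by
          exact norm_sub_le (Complex.exp (θ * Complex.I)) 1
    _ = 2 := by rw [tcb_abs_exp]; norm_num

lemma tcb_integrable {Ω : Type*} [MeasurableSpace Ω] {μ : Measure Ω} [IsFiniteMeasure μ]
    {E : Type*} [NormedAddCommGroup E] {f : Ω → E} (hf : AEStronglyMeasurable f μ) (C : ℝ)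
    (h : ∀ ω, ‖f ω‖ ≤ C) : Integrable f μ :=
  Integrable.mono' (integrable_const C) hf (Filter.Eventually.of_forall h)

theorem telescoping_charFun_bound {Ω : Type*} [MeasurableSpace Ω]
    (μ : Measure Ω) [IsProbabilityMeasure μ]
    (X : ℤ → Ω → ℝ) (hmeas : ∀ t, Measurable (X t))
    (hstat : ∀ t : ℤ,
      μ.map (fun ω => fun s : ℤ => X (s + t) ω) = μ.map (fun ω => fun s : ℤ => X s ω))
    (a : ℝ) (ha : 0 < a) (k m d : ℕ) (hk : 0 < k) (hd : 0 < d) (hdm : d < m) (x : ℝ) :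
    let S : ℕ → Ω → ℝ := fun j ω => ∑ i ∈ Finset.range j, X (i + 1) ω
    let φ : ℕ → ℂ := fun j => ∫ ω, Complex.exp (x * S j ω / a * Complex.I) ∂μ
    ‖(k : ℂ) * (φ m - 1) - ((k * m : ℕ) : ℂ) * (φ d - φ (d - 1))‖ ≤
      (k : ℝ) * ((d : ℝ) - 1) * ‖φ d - 1‖ +
        (k : ℝ) * d * ‖φ (d - 1) - 1‖ +
        (k : ℝ) * ∑ j ∈ Finset.Icc (d + 1) m,
          ∫ ω, min (|x / a * (S j ω - S d ω)|) 2 * min (|x / a * X 1 ω|) 2 ∂μ := by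
  intro S φ
  obtain ⟨d₀, rfl⟩ : ∃ d', d = d' + 1 := ⟨d - 1, (Nat.succ_pred_eq_of_pos hd).symm⟩
  set e : ℝ → ℂ := fun r => Complex.exp ((x:ℂ) * r / a * Complex.I) with he
  have ecast : ∀ r : ℝ, (x:ℂ) * r / a * Complex.I = ((x * r / a : ℝ) : ℂ) * Complex.I := by
    intro r; push_cast; ring
  have habs : ∀ r, ‖e r‖ = 1 := by
    intro r; rw [he]; simp only; rw [ecast]; exact tcb_abs_exp _
  have habs1 : ∀ r, ‖e r - 1‖ ≤ min (|x / a * r|) 2 := by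
    intro r
    have h := tcb_abs_exp_sub_one (x * r / a)
    rw [← ecast] at h
    have h2 : |x * r / a| = |x / a * r| := by congr 1; ring
    rwa [h2] at h
  have hemul : ∀ r s : ℝ, e (r + s) = e r * e s := by
    intro r s; rw [he]; simp only; rw [← Complex.exp_add]; congr 1; push_cast; ring
  have hSmeas : ∀ j, Measurable (S j) := fun j => Finset.measurable_sum _ fun i _ => hmeas _
  have hemeas : Measurable e := by
    apply Complex.measurable_exp.comp
    exact ((measurable_const.mul Complex.measurable_ofReal).div_const _).mul_const _
  have hIe : ∀ (f : Ω → ℝ), Measurable f → Integrable (fun ω => e (f ω)) μ := by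
    intro f hf
    refine tcb_integrable (hemeas.comp hf).aestronglyMeasurable 1 fun ω => ?_
    rw [habs]
  have hIe3 : ∀ (f g : Ω → ℝ), Measurable f → Measurable g →
      Integrable (fun ω => e (f ω) * e (g ω)) μ := by
    intro f g hf hg
    refine tcb_integrable ((hemeas.comp hf).mul (hemeas.comp hg)).aestronglyMeasurable 1 fun ω => ?_
    rw [norm_mul, habs, habs, one_mul]
  have hIe2 : ∀ (f g : Ω → ℝ), Measurable f → Measurable g →
      Integrable (fun ω => e (f ω) * (e (g ω) - 1)) μ := by
    intro f g hf hg
    refine tcb_integrable ((hemeas.comp hf).mul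
      ((hemeas.comp hg).sub measurable_const)).aestronglyMeasurable 2 fun ω => ?_
    rw [norm_mul, habs, one_mul]
    exact (habs1 _).trans (min_le_right _ _)
  -- stationarity shift
  have hshift : ∀ j : ℕ,
      (∫ ω, e (∑ i ∈ Finset.range j, X (i + 2) ω) ∂μ)
        = ∫ ω, e (∑ i ∈ Finset.range j, X (i + 1) ω) ∂μ := by
    intro j
    have hY : Measurable (fun ω => fun s : ℤ => X s ω) :=
      measurable_pi_lambda _ fun s => hmeas s
    have hY1 : Measurable (fun ω => fun s : ℤ => X (s + 1) ω) :=
      measurable_pi_lambda _ fun s => hmeas _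
    have hF : Measurable (fun y : ℤ → ℝ => e (∑ i ∈ Finset.range j, y (i + 1))) :=
      hemeas.comp (Finset.measurable_sum _ fun i _ => measurable_pi_apply _)
    have h1 := integral_map (μ := μ) (φ := fun ω => fun s : ℤ => X (s + 1) ω)
      (f := fun y : ℤ → ℝ => e (∑ i ∈ Finset.range j, y (i + 1)))
      hY1.aemeasurable hF.aestronglyMeasurable
    have h2 := integral_map (μ := μ) (φ := fun ω => fun s : ℤ => X s ω)
      (f := fun y : ℤ → ℝ => e (∑ i ∈ Finset.range j, y (i + 1)))
      hY.aemeasurable hF.aestronglyMeasurable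
    rw [hstat 1, h2] at h1
    refine Eq.trans ?_ h1.symm
    simp only
    congr 1
  have hφ0 : φ 0 = 1 := by
    simp [φ, S]
  -- step identity
  have hstep : ∀ j : ℕ, φ (j + 1) - φ j
      = ∫ ω, e (S (j + 1) ω - X 1 ω) * (e (X 1 ω) - 1) ∂μ := by
    intro j
    have hSX : ∀ ω, S (j + 1) ω - X 1 ω = ∑ i ∈ Finset.range j, X (i + 2) ω := by
      intro ω
      have h := Finset.sum_range_succ' (fun i : ℕ => X (i + 1) ω) j
      simp only [S]
      rw [h]
      have : X ((0:ℕ) + 1) ω = X 1 ω := by norm_num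
      rw [this, add_sub_cancel_right]
      refine Finset.sum_congr rfl fun i _ => ?_
      have : ((i + 1 : ℕ) : ℤ) + 1 = (i : ℤ) + 2 := by push_cast; ring
      rw [this]
    have h1 : φ j = ∫ ω, e (S (j + 1) ω - X 1 ω) ∂μ := by
      calc φ j = ∫ ω, e (S j ω) ∂μ := rfl
        _ = ∫ ω, e (∑ i ∈ Finset.range j, X (i + 2) ω) ∂μ := (hshift j).symm
        _ = ∫ ω, e (S (j + 1) ω - X 1 ω) ∂μ := by
            congr 1; funext ω; rw [hSX ω]
    have h2 : φ (j + 1) = ∫ ω, e (S (j + 1) ω - X 1 ω) * e (X 1 ω) ∂μ := by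
      calc φ (j + 1) = ∫ ω, e (S (j + 1) ω) ∂μ := rfl
        _ = _ := by
            congr 1; funext ω; rw [← hemul]; congr 1; ring
    rw [h1, h2, ← integral_sub
      (hIe3 (fun ω => S (j+1) ω - X 1 ω) _ ((hSmeas (j+1)).sub (hmeas 1)) (hmeas 1))
      (hIe (fun ω => S (j+1) ω - X 1 ω) ((hSmeas (j+1)).sub (hmeas 1)))]
    congr 1; funext ω; ring
  -- integrability of the bound
  have hgmeas : ∀ j : ℕ, Measurable (fun ω =>
      min (|x / a * (S j ω - S (d₀+1) ω)|) 2 * min (|x / a * X 1 ω|) 2) :=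
    fun j => ((((hSmeas j).sub (hSmeas (d₀+1))).const_mul (x/a)).abs.min measurable_const).mul
      (((hmeas 1).const_mul (x/a)).abs.min measurable_const)
  have hgint : ∀ j : ℕ, Integrable (fun ω =>
      min (|x / a * (S j ω - S (d₀+1) ω)|) 2 * min (|x / a * X 1 ω|) 2) μ := by
    intro j
    refine tcb_integrable (hgmeas j).aestronglyMeasurable 4 fun ω => ?_
    rw [Real.norm_eq_abs, abs_mul,
      abs_of_nonneg (le_min (abs_nonneg _) (by norm_num : (0:ℝ) ≤ 2)),
      abs_of_nonneg (le_min (abs_nonneg _) (by norm_num : (0:ℝ) ≤ 2))]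
    have := min_le_right (|x / a * (S j ω - S (d₀+1) ω)|) 2
    have := min_le_right (|x / a * X 1 ω|) 2
    have := le_min (abs_nonneg (x / a * (S j ω - S (d₀+1) ω))) (by norm_num : (0:ℝ) ≤ 2)
    have := le_min (abs_nonneg (x / a * X 1 ω)) (by norm_num : (0:ℝ) ≤ 2)
    nlinarith
  -- the key per-term bound
  have hDelta : ∀ j : ℕ,
      ‖(φ (j + 1) - φ j) - (φ (d₀ + 1) - φ d₀)‖
        ≤ ∫ ω, min (|x / a * (S (j+1) ω - S (d₀+1) ω)|) 2 * min (|x / a * X 1 ω|) 2 ∂μ := by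
    intro j
    rw [hstep j, hstep d₀, ← integral_sub
      (hIe2 (fun ω => S (j+1) ω - X 1 ω) _ ((hSmeas (j+1)).sub (hmeas 1)) (hmeas 1))
      (hIe2 (fun ω => S (d₀+1) ω - X 1 ω) _ ((hSmeas (d₀+1)).sub (hmeas 1)) (hmeas 1))]
    refine (norm_integral_le_integral_norm _).trans ?_
    refine integral_mono_of_nonneg (Filter.Eventually.of_forall fun ω => norm_nonneg _)
      (hgint (j+1)) (Filter.Eventually.of_forall fun ω => ?_)
    have hid : e (S (j+1) ω - X 1 ω) * (e (X 1 ω) - 1)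
          - e (S (d₀+1) ω - X 1 ω) * (e (X 1 ω) - 1)
        = e (S (d₀+1) ω - X 1 ω) *
            ((e (S (j+1) ω - S (d₀+1) ω) - 1) * (e (X 1 ω) - 1)) := by
      have h3 : e (S (j+1) ω - X 1 ω)
          = e (S (d₀+1) ω - X 1 ω) * e (S (j+1) ω - S (d₀+1) ω) := by
        rw [← hemul]; congr 1; ring
      rw [h3]; ring
    simp only
    rw [hid, norm_mul, norm_mul, habs, one_mul]
    exact mul_le_mul (habs1 _) (habs1 _) (norm_nonneg _)
      (le_min (abs_nonneg _) (by norm_num : (0:ℝ) ≤ 2))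
  -- assembly
  simp only [Nat.add_sub_cancel]
  have htel : (k:ℂ) * (φ m - 1) - ((k*m : ℕ):ℂ) * (φ (d₀+1) - φ d₀)
      = (k:ℂ) * ∑ j ∈ Finset.range m, ((φ (j+1) - φ j) - (φ (d₀+1) - φ d₀)) := by
    rw [Finset.sum_sub_distrib, Finset.sum_range_sub (fun i => φ i), hφ0,
      Finset.sum_const, Finset.card_range, nsmul_eq_mul]
    push_cast
    ring
  rw [htel]
  have hsplit : ∑ j ∈ Finset.range m, ((φ (j+1) - φ j) - (φ (d₀+1) - φ d₀))
      = (∑ j ∈ Finset.range (d₀+1), ((φ (j+1) - φ j) - (φ (d₀+1) - φ d₀)))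
        + ∑ j ∈ Finset.Ico (d₀+1) m, ((φ (j+1) - φ j) - (φ (d₀+1) - φ d₀)) := by
    rw [Finset.range_eq_Ico, Finset.range_eq_Ico]
    exact (Finset.sum_Ico_consecutive _ (Nat.zero_le _) hdm.le).symm
  rw [hsplit]
  have hfirst : (∑ j ∈ Finset.range (d₀+1), ((φ (j+1) - φ j) - (φ (d₀+1) - φ d₀)))
      = -(d₀:ℂ) * (φ (d₀+1) - 1) + ((d₀:ℂ)+1) * (φ d₀ - 1) := by
    rw [Finset.sum_sub_distrib, Finset.sum_range_sub (fun i => φ i), hφ0,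
      Finset.sum_const, Finset.card_range, nsmul_eq_mul]
    push_cast
    ring
  rw [hfirst]
  have habs_first : ‖-(d₀:ℂ) * (φ (d₀+1) - 1) + ((d₀:ℂ)+1) * (φ d₀ - 1)‖
      ≤ (d₀:ℝ) * ‖φ (d₀+1) - 1‖ + ((d₀:ℝ)+1) * ‖φ d₀ - 1‖ := by
    refine (norm_add_le _ _).trans ?_
    have e1 : ‖-(d₀:ℂ) * (φ (d₀+1) - 1)‖
        = (d₀:ℝ) * ‖φ (d₀+1) - 1‖ := by
      rw [norm_mul]
      congr 1
      rw [norm_neg, Complex.norm_natCast]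
    have e2 : ‖((d₀:ℂ)+1) * (φ d₀ - 1)‖
        = ((d₀:ℝ)+1) * ‖φ d₀ - 1‖ := by
      rw [norm_mul]
      congr 1
      have hcc : ((d₀:ℂ)+1) = (((d₀:ℝ)+1 : ℝ) : ℂ) := by push_cast; ring
      rw [hcc, Complex.norm_real, Real.norm_eq_abs, abs_of_nonneg (by positivity)]
    rw [e1, e2]
  have hsecond : ‖∑ j ∈ Finset.Ico (d₀+1) m, ((φ (j+1) - φ j) - (φ (d₀+1) - φ d₀))‖
      ≤ ∑ j ∈ Finset.Ico (d₀+1) m,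
          ∫ ω, min (|x / a * (S (j+1) ω - S (d₀+1) ω)|) 2 * min (|x / a * X 1 ω|) 2 ∂μ := by
    refine (norm_sum_le _ _).trans ?_
    exact Finset.sum_le_sum fun j _ => hDelta j
  have hreindex : ∑ j ∈ Finset.Icc (d₀+1+1) m,
        (∫ ω, min (|x / a * (S j ω - S (d₀+1) ω)|) 2 * min (|x / a * X 1 ω|) 2 ∂μ)
      = ∑ j ∈ Finset.Ico (d₀+1) m,
          ∫ ω, min (|x / a * (S (j+1) ω - S (d₀+1) ω)|) 2 * min (|x / a * X 1 ω|) 2 ∂μ := by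
    rw [← Finset.Ico_add_one_right_eq_Icc, ← Finset.map_add_right_Ico _ _ 1, Finset.sum_map]
    simp [addRightEmbedding_apply]
  rw [hreindex]
  calc ‖(k:ℂ) * ((-(d₀:ℂ) * (φ (d₀+1) - 1) + ((d₀:ℂ)+1) * (φ d₀ - 1))
          + ∑ j ∈ Finset.Ico (d₀+1) m, ((φ (j+1) - φ j) - (φ (d₀+1) - φ d₀)))‖
      = (k:ℝ) * ‖(-(d₀:ℂ) * (φ (d₀+1) - 1) + ((d₀:ℂ)+1) * (φ d₀ - 1))
          + ∑ j ∈ Finset.Ico (d₀+1) m, ((φ (j+1) - φ j) - (φ (d₀+1) - φ d₀))‖ := by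
        rw [norm_mul, Complex.norm_natCast]
    _ ≤ (k:ℝ) * (((d₀:ℝ) * ‖φ (d₀+1) - 1‖ + ((d₀:ℝ)+1) * ‖φ d₀ - 1‖)
          + ∑ j ∈ Finset.Ico (d₀+1) m,
              ∫ ω, min (|x / a * (S (j+1) ω - S (d₀+1) ω)|) 2 * min (|x / a * X 1 ω|) 2 ∂μ) := by
        refine mul_le_mul_of_nonneg_left ?_ (Nat.cast_nonneg k)
        exact ((norm_add_le _ _).trans (add_le_add habs_first hsecond))
    _ = _ := by push_cast; ring
end
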